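/- Let Ω ⊆ ℝⁿ satisfy the ε-ball condition, work in the local frame at x₀ ∈ ∂Ω as above, and let r = (√3/2)ε. Suppose x' ∈ D_r(0'), x_n ∈ (−ε, ε) with (x', x_n) ∈ ∂Ω, and let x̃_n ∈ ℝ satisfy |x̃_n| ≤ ε − √(ε² − ‖x'‖²). Then x̃_n < x_n implies (x', x̃_n) ∈ Ω, and x̃_n > x_n implies (x', x̃_n) ∈ ℝⁿ \ closure(Ω). -/
import Mathlib


open Metric
open scoped RealInnerProductSpace

set_option maxHeartbeats 2000000 in
/-- In the local frame at `x₀ ∈ ∂Ω`, with `r = (√3/2)ε`: if `(x', x_n) ∈ ∂Ω` with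
`‖x'‖ < r`, `x_n ∈ (−ε, ε)`, and `|x̃_n| ≤ ε − √(ε² − ‖x'‖²)`, then `x̃_n < x_n` implies
`(x', x̃_n) ∈ Ω` and `x̃_n > x_n` implies `(x', x̃_n) ∉ closure Ω`. -/
theorem stmt_10 {n : ℕ} (hn : 2 ≤ n) (ε : ℝ) (hε : 0 < ε)
    (Ω : Set (EuclideanSpace ℝ (Fin n))) (hΩ : IsOpen Ω)
    (hball : ∀ x ∈ frontier Ω, ∃ d : EuclideanSpace ℝ (Fin n), ‖d‖ = 1 ∧
      ball (x - ε • d) ε ⊆ Ω ∧ ball (x + ε • d) ε ⊆ (closure Ω)ᶜ)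
    (x₀ : EuclideanSpace ℝ (Fin n)) (hx₀ : x₀ ∈ frontier Ω)
    (d₀ : EuclideanSpace ℝ (Fin n)) (hd₀ : ‖d₀‖ = 1)
    (h1 : ball (x₀ - ε • d₀) ε ⊆ Ω) (h2 : ball (x₀ + ε • d₀) ε ⊆ (closure Ω)ᶜ)
    (v : EuclideanSpace ℝ (Fin n)) (hv : ⟪v, d₀⟫ = 0)
    (hvr : ‖v‖ < Real.sqrt 3 / 2 * ε)
    (t : ℝ) (ht : t ∈ Set.Ioo (-ε) ε) (htΩ : x₀ + v + t • d₀ ∈ frontier Ω)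
    (t' : ℝ) (ht' : |t'| ≤ ε - Real.sqrt (ε ^ 2 - ‖v‖ ^ 2)) :
    (t' < t → x₀ + v + t' • d₀ ∈ Ω) ∧ (t < t' → x₀ + v + t' • d₀ ∈ (closure Ω)ᶜ) := by
  obtain ⟨d, hd, hb1, hb2⟩ := hball _ htΩ
  set q : ℝ := Real.sqrt (ε ^ 2 - ‖v‖ ^ 2) with hqdef
  have hv2 : ‖v‖ ^ 2 < 3 / 4 * ε ^ 2 := by
    nlinarith [Real.sq_sqrt (by norm_num : (0:ℝ) ≤ 3), Real.sqrt_nonneg 3, norm_nonneg v, hvr, hε]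
  have hq2 : q ^ 2 = ε ^ 2 - ‖v‖ ^ 2 := Real.sq_sqrt (by nlinarith)
  have hq0 : 0 ≤ q := Real.sqrt_nonneg _
  have hqε : ε / 2 < q := by nlinarith [sq_nonneg ‖v‖]
  have hqle : q ≤ ε := by nlinarith [sq_nonneg ‖v‖]
  have hnorm : ∀ a : ℝ, ‖v + a • d₀‖ ^ 2 = ‖v‖ ^ 2 + a ^ 2 := by
    intro a
    rw [norm_add_sq_real, real_inner_smul_right, hv, norm_smul]
    simp [hd₀, Real.norm_eq_abs, sq_abs]
  have hxnΩ : x₀ + v + t • d₀ ∉ Ω := fun h => htΩ.2 (by rwa [hΩ.interior_eq])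
  have hxcl : x₀ + v + t • d₀ ∈ closure Ω := htΩ.1
  have hA1 : ε ≤ dist (x₀ + v + t • d₀) (x₀ - ε • d₀) := by
    by_contra h; push_neg at h; exact hxnΩ (h1 (mem_ball.mpr h))
  have hA2 : ε ≤ dist (x₀ + v + t • d₀) (x₀ + ε • d₀) := by
    by_contra h; push_neg at h; exact (h2 (mem_ball.mpr h)) hxcl
  have e1 : (x₀ + v + t • d₀) - (x₀ - ε • d₀) = v + (t + ε) • d₀ := by module
  have e2 : (x₀ + v + t • d₀) - (x₀ + ε • d₀) = v + (t - ε) • d₀ := by module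
  have kA1 : ε ^ 2 ≤ ‖v‖ ^ 2 + (t + ε) ^ 2 := by
    rw [dist_eq_norm, e1] at hA1
    nlinarith [hnorm (t + ε), norm_nonneg (v + (t + ε) • d₀), hε]
  have kA2 : ε ^ 2 ≤ ‖v‖ ^ 2 + (t - ε) ^ 2 := by
    rw [dist_eq_norm, e2] at hA2
    nlinarith [hnorm (t - ε), norm_nonneg (v + (t - ε) • d₀), hε]
  have hts1 : t ≤ ε - q := by nlinarith [kA2, hq2, hq0, ht.2]
  have hts2 : -(ε - q) ≤ t := by nlinarith [kA1, hq2, hq0, ht.1]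
  obtain ⟨ht'2, ht'1⟩ := abs_le.mp ht'
  -- disjointness of the two extreme balls
  have hdisj : ∀ c₁ c₂ : EuclideanSpace ℝ (Fin n), ball c₁ ε ⊆ Ω →
      ball c₂ ε ⊆ (closure Ω)ᶜ → 2 * ε ≤ dist c₁ c₂ := by
    intro c₁ c₂ hc₁ hc₂
    by_contra h; push_neg at h
    have hm1 : midpoint ℝ c₁ c₂ ∈ ball c₁ ε := by
      rw [mem_ball, dist_midpoint_left, Real.norm_ofNat]
      linarith
    have hm2 : midpoint ℝ c₁ c₂ ∈ ball c₂ ε := by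
      rw [mem_ball, dist_midpoint_right, Real.norm_ofNat]
      linarith
    exact (hc₂ hm2) (subset_closure (hc₁ hm1))
  have hB1 := hdisj _ _ hb1 h2
  have hB2 := hdisj _ _ h1 hb2
  have f1 : ((x₀ + v + t • d₀) - ε • d) - (x₀ + ε • d₀) = (v + t • d₀) - (ε • d + ε • d₀) := by
    module
  have f2 : (x₀ - ε • d₀) - ((x₀ + v + t • d₀) + ε • d) = -((v + t • d₀) + (ε • d + ε • d₀)) := by
    module
  have hu : ‖ε • d + ε • d₀‖ ^ 2 = 2 * ε ^ 2 + 2 * ε ^ 2 * ⟪d, d₀⟫ := by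
    rw [norm_add_sq_real, real_inner_smul_left, real_inner_smul_right, norm_smul, norm_smul]
    simp [hd, hd₀, Real.norm_eq_abs, sq_abs]; ring
  have hpar := parallelogram_law_with_norm ℝ (v + t • d₀) (ε • d + ε • d₀)
  rw [dist_eq_norm, f1] at hB1
  rw [dist_eq_norm, f2, norm_neg] at hB2
  have kB : 8 * ε ^ 2 ≤ 2 * (‖v‖ ^ 2 + t ^ 2) + 2 * (2 * ε ^ 2 + 2 * ε ^ 2 * ⟪d, d₀⟫) := by
    nlinarith [hpar, hu, hnorm t, hB1, hB2, hε,
      norm_nonneg ((v + t • d₀) - (ε • d + ε • d₀)),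
      norm_nonneg ((v + t • d₀) + (ε • d + ε • d₀))]
  have hc : ε ^ 2 + q ^ 2 - t ^ 2 ≤ 2 * ε ^ 2 * ⟪d, d₀⟫ := by nlinarith [kB, hq2]
  constructor
  · intro htt
    apply hb1
    have ey : (x₀ + v + t' • d₀) - ((x₀ + v + t • d₀) - ε • d) = (t' - t) • d₀ + ε • d := by
      module
    have hny : ‖(t' - t) • d₀ + ε • d‖ ^ 2
        = (t' - t) ^ 2 + 2 * (t' - t) * ε * ⟪d, d₀⟫ + ε ^ 2 := by
      rw [norm_add_sq_real, real_inner_smul_left, real_inner_smul_right,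
        real_inner_comm d₀ d, norm_smul, norm_smul]
      simp [hd, hd₀, Real.norm_eq_abs, sq_abs]; ring
    have hkey : t - t' < 2 * ε * ⟪d, d₀⟫ := by
      nlinarith [hc, hε, hqε,
        mul_nonneg (by linarith : (0:ℝ) ≤ ε - q - t) (by linarith : (0:ℝ) ≤ (ε - q) + t + ε),
        mul_nonneg (le_of_lt hε) (by linarith : (0:ℝ) ≤ t' + (ε - q))]
    have hsq : ‖(t' - t) • d₀ + ε • d‖ ^ 2 < ε ^ 2 := by
      nlinarith [hny, mul_pos (by linarith : (0:ℝ) < t - t')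
        (by linarith : (0:ℝ) < 2 * ε * ⟪d, d₀⟫ - (t - t'))]
    rw [mem_ball, dist_eq_norm, ey]
    nlinarith [norm_nonneg ((t' - t) • d₀ + ε • d), hε, hsq]
  · intro htt
    apply hb2
    have ey : (x₀ + v + t' • d₀) - ((x₀ + v + t • d₀) + ε • d) = (t' - t) • d₀ - ε • d := by
      module
    have hny : ‖(t' - t) • d₀ - ε • d‖ ^ 2
        = (t' - t) ^ 2 - 2 * (t' - t) * ε * ⟪d, d₀⟫ + ε ^ 2 := by
      rw [norm_sub_sq_real, real_inner_smul_left, real_inner_smul_right,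
        real_inner_comm d₀ d, norm_smul, norm_smul]
      simp [hd, hd₀, Real.norm_eq_abs, sq_abs]; ring
    have hkey : t' - t < 2 * ε * ⟪d, d₀⟫ := by
      nlinarith [hc, hε, hqε,
        mul_nonneg (by linarith : (0:ℝ) ≤ (ε - q) + t) (by linarith : (0:ℝ) ≤ (ε - q) - t + ε),
        mul_nonneg (le_of_lt hε) (by linarith : (0:ℝ) ≤ (ε - q) - t')]
    have hsq : ‖(t' - t) • d₀ - ε • d‖ ^ 2 < ε ^ 2 := by
      nlinarith [hny, mul_pos (by linarith : (0:ℝ) < t' - t)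
        (by linarith : (0:ℝ) < 2 * ε * ⟪d, d₀⟫ - (t' - t))]
    rw [mem_ball, dist_eq_norm, ey]
    nlinarith [norm_nonneg ((t' - t) • d₀ - ε • d), hε, hsq]
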